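/- Chernoff-type bound for random Fourier coefficients: Let V = F_p^n, N = |V|, 0 < q < 1, and let R ⊆ V be a random subset where each element is included independently with probability q, with qN = |R_expected| ≥ C N^{1/2} for a suitable constant. Then with probability 1 - o(1) (as N → ∞), sup_{ξ≠0} |1̂_R(ξ)| < qN / (N log N), where 1̂_R(ξ) = (1/N) Σ_{v∈V} 1_R(v) e(-⟨v,ξ⟩). Quantitatively, for fixed ξ ≠ 0, P(Re(N·1̂_R(ξ)) ≥ qN/log N) ≤ exp(-qN/(2 log^2 N)). -/

import Mathlib

open Finset

/-- `e(z) = e^{2πiz}`. -/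
noncomputable def eC (z : ℝ) : ℂ := Complex.exp (2 * Real.pi * Complex.I * z)

/-- `⟨x,ξ⟩ = (Σ_i x_i ξ_i)/p` as a real number. -/
noncomputable def bracket (p n : ℕ) (x ξ : Fin n → ZMod p) : ℝ :=
  ((∑ i, x i * ξ i : ZMod p).val : ℝ) / p

/-- Fourier transform over `V = F_p^n`: `f̂(ξ) = E_{x∈V} f(x) e(-⟨x,ξ⟩)`. -/
noncomputable def ft (p n : ℕ) [NeZero p] (f : (Fin n → ZMod p) → ℂ) (ξ : Fin n → ZMod p) : ℂ :=
  (Fintype.card (Fin n → ZMod p) : ℂ)⁻¹ * ∑ x, f x * eC (-(bracket p n x ξ))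
/-- The probability that an independent Bernoulli(q) random subset of `V` equals `S`:
`q^{|S|}(1-q)^{N-|S|}`. -/
noncomputable def bernoulliWeight (p n : ℕ) [NeZero p] (q : ℝ)
    (S : Finset (Fin n → ZMod p)) : ℝ :=
  q ^ S.card * (1 - q) ^ (Fintype.card (Fin n → ZMod p) - S.card)

lemma eC_add (x y : ℝ) : eC (x + y) = eC x * eC y := by
  unfold eC
  rw [← Complex.exp_add]
  push_cast
  ring

lemma eC_int (m : ℤ) : eC m = 1 := by
  unfold eC
  rw [show 2 * (Real.pi : ℂ) * Complex.I * (m : ℝ) = (m : ℤ) * (2 * Real.pi * Complex.I) by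
    push_cast; ring]
  exact Complex.exp_int_mul_two_pi_mul_I m

lemma eC_add_int (x : ℝ) (m : ℤ) : eC (x + m) = eC x := by
  rw [eC_add, eC_int, mul_one]

lemma eC_re (x : ℝ) : (eC x).re = Real.cos (2 * Real.pi * x) := by
  unfold eC
  rw [show 2 * (Real.pi : ℂ) * Complex.I * (x : ℝ) = ((2 * Real.pi * x : ℝ) : ℂ) * Complex.I by
    push_cast; ring]
  exact Complex.exp_ofReal_mul_I_re _

lemma eC_eq_one_iff (x : ℝ) : eC x = 1 ↔ ∃ m : ℤ, x = m := by
  unfold eC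
  rw [Complex.exp_eq_one_iff]
  constructor
  · rintro ⟨m, hm⟩
    refine ⟨m, ?_⟩
    have hπ : (2 : ℂ) * Real.pi * Complex.I ≠ 0 := by
      simp [Real.pi_ne_zero, Complex.I_ne_zero]
    have h2 : (x : ℂ) * (2 * Real.pi * Complex.I) = (m : ℂ) * (2 * Real.pi * Complex.I) := by
      rw [← hm]; ring
    have : (x : ℂ) = (m : ℂ) := mul_right_cancel₀ hπ h2
    exact_mod_cast this
  · rintro ⟨m, rfl⟩
    exact ⟨m, by push_cast; ring⟩

/-- Character sum vanishes: for `ξ ≠ 0` and `k` not divisible by `p`. -/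
lemma sum_eC_eq_zero {p : ℕ} [NeZero p] (hp : p.Prime) {n : ℕ} (k : ℕ)
    (hk : (k : ZMod p) ≠ 0) (ξ : Fin n → ZMod p) (hξ : ξ ≠ 0) :
    ∑ v : Fin n → ZMod p, eC (-(k * bracket p n v ξ)) = 0 := by
  haveI := Fact.mk hp
  obtain ⟨i, hi⟩ := Function.ne_iff.mp hξ
  have hi' : ξ i ≠ 0 := by simpa using hi
  set w : Fin n → ZMod p := Pi.single i (ξ i)⁻¹ with hw
  have hwsum : ∑ j, w j * ξ j = 1 := by
    rw [Finset.sum_eq_single i]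
    · simp [hw, inv_mul_cancel₀ hi']
    · intro j _ hj
      simp [hw, Pi.single_eq_of_ne hj]
    · simp
  set f : (Fin n → ZMod p) → ℂ := fun v => eC (-(k * bracket p n v ξ)) with hf
  set ζ : ℂ := eC (-(k / p)) with hζ
  have hp1 : 1 < p := hp.one_lt
  have hppos : (0:ℝ) < p := by positivity
  have key : ∀ v, f (v + w) = ζ * f v := by
    intro v
    set a : ZMod p := ∑ j, v j * ξ j with ha
    have hsum : ∑ j, (v + w) j * ξ j = a + 1 := by
      simp only [Pi.add_apply, add_mul, Finset.sum_add_distrib, hwsum, ha]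
    haveI : Fact (1 < p) := ⟨hp1⟩
    set m : ℕ := (a.val + 1) / p with hm
    have hval : ((a + 1).val : ℤ) = (a.val : ℤ) + 1 - p * (m : ℤ) := by
      rw [ZMod.val_add, ZMod.val_one]
      rw [hm]
      push_cast [Int.emod_def]
      push_cast [Int.natCast_ediv]
      ring
    have hcast : ((a + 1).val : ℝ) = (a.val : ℝ) + 1 - (p : ℝ) * m := by
      exact_mod_cast congrArg (fun z : ℤ => (z : ℝ)) hval
    have harg : -(k * bracket p n (v + w) ξ)
        = -(k * bracket p n v ξ) + -(k / p) + (((k * m : ℕ) : ℤ) : ℝ) := by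
      unfold bracket
      rw [hsum, ← ha, hcast]
      have hp0 : (p : ℝ) ≠ 0 := ne_of_gt hppos
      push_cast
      field_simp
      ring
    rw [hf]
    simp only
    rw [harg, eC_add_int, eC_add, mul_comm]
  have hshift : ∑ v : Fin n → ZMod p, f (v + w) = ∑ v, f v := by
    exact Equiv.sum_comp (Equiv.addRight w) f
  have hζS : ζ * ∑ v, f v = ∑ v, f v := by
    conv_rhs => rw [← hshift]
    rw [Finset.mul_sum]
    exact Finset.sum_congr rfl fun v _ => (key v).symm
  have hζ1 : ζ ≠ 1 := by
    rw [hζ, Ne, eC_eq_one_iff]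
    rintro ⟨m, hm⟩
    have hp0 : (p : ℝ) ≠ 0 := Nat.cast_ne_zero.mpr (NeZero.ne p)
    have hmr : (k : ℝ) = ((p : ℤ) * (-m) : ℤ) := by
      push_cast
      field_simp at hm
      linarith [hm]
    have hki : (k : ℤ) = (p : ℤ) * (-m) := by exact_mod_cast hmr
    have hdvd : (p : ℤ) ∣ (k : ℤ) := ⟨-m, hki⟩
    have : p ∣ k := by exact_mod_cast hdvd
    exact hk ((ZMod.natCast_eq_zero_iff k p).mpr this)
  have hsub : (1 - ζ) * ∑ v, f v = 0 := by
    rw [sub_mul, one_mul, sub_eq_zero]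
    exact hζS.symm
  rcases mul_eq_zero.mp hsub with h | h
  · exact absurd (sub_eq_zero.mp h).symm hζ1
  · exact h

lemma exp_le_one_add_add_sq {x : ℝ} (h : |x| ≤ 1) : Real.exp x ≤ 1 + x + x ^ 2 := by
  have hb := Real.exp_bound h (n := 3) (by norm_num)
  have h1 : ∑ m ∈ Finset.range 3, x ^ m / (m.factorial : ℝ) = 1 + x + x ^ 2 / 2 := by
    norm_num [Finset.sum_range_succ, Nat.factorial]
  rw [h1] at hb
  have h2 : |x| ^ 3 ≤ x ^ 2 := by
    have : |x| ^ 3 = |x| * x ^ 2 := by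
      rw [pow_succ, sq_abs]; ring
    rw [this]
    nlinarith [sq_nonneg x, abs_nonneg x]
  norm_num [Nat.factorial] at hb
  have h3 := (abs_le.mp hb).2
  nlinarith [h2, h3]

open Classical in
/-- Chernoff-type bound for random Fourier coefficients.  There is a
constant `C > 0` such that for a Bernoulli(q) random subset `R` of `F_p^n` with
`qN ≥ C√N`, for every fixed `ξ ≠ 0` the probability that
`Re(N·1̂_R(ξ)) = Re Σ_{v∈R} e(-⟨v,ξ⟩)` is at least `qN/log N` is at most
`exp(-qN/(2 log² N))`. -/
theorem chernoff_fourier {p : ℕ} [NeZero p] (hp : p.Prime) (hodd : Odd p) :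
    ∃ C : ℝ, 0 < C ∧
      ∀ (n : ℕ) (q : ℝ), 0 < q → q < 1 →
        C * Real.sqrt (Fintype.card (Fin n → ZMod p) : ℝ)
          ≤ q * (Fintype.card (Fin n → ZMod p) : ℝ) →
        ∀ ξ : Fin n → ZMod p, ξ ≠ 0 →
          ∑ S ∈ (Finset.univ : Finset (Fin n → ZMod p)).powerset.filter
              (fun S => q * (Fintype.card (Fin n → ZMod p) : ℝ)
                  / Real.log (Fintype.card (Fin n → ZMod p) : ℝ)
                ≤ (∑ v ∈ S, eC (-(bracket p n v ξ))).re),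
            bernoulliWeight p n q S
          ≤ Real.exp (-(q * (Fintype.card (Fin n → ZMod p) : ℝ))
              / (2 * Real.log (Fintype.card (Fin n → ZMod p) : ℝ) ^ 2)) := by
  refine ⟨1, one_pos, ?_⟩
  intro n q hq0 hq1 _hC ξ hξ
  haveI := Fact.mk hp
  obtain ⟨i, hi⟩ := Function.ne_iff.mp hξ
  -- basic numerics
  have hp2 : p ≠ 2 := by
    rintro rfl
    simp [Nat.odd_iff] at hodd
  have hp3 : 3 ≤ p := by
    rcases hp.two_le.lt_or_eq with h | h
    · omega
    · omega
  set N : ℕ := Fintype.card (Fin n → ZMod p) with hNdef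
  have hNcard : N = p ^ n := by
    rw [hNdef, Fintype.card_fun]
    simp [ZMod.card]
  have hn0 : n ≠ 0 := by
    rintro rfl
    exact i.elim0
  have hN3 : 3 ≤ N := by
    rw [hNcard]
    calc 3 ≤ p := hp3
    _ = p ^ 1 := (pow_one p).symm
    _ ≤ p ^ n := Nat.pow_le_pow_right hp.pos (by omega)
  have hNr3 : (3 : ℝ) ≤ (N : ℝ) := by exact_mod_cast hN3
  set L : ℝ := Real.log (N : ℝ) with hLdef
  have hL1 : 1 < L := by
    rw [hLdef]
    calc (1 : ℝ) < Real.log 3 := by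
          rw [Real.lt_log_iff_exp_lt (by norm_num)]
          calc Real.exp 1 < 2.7182818286 := Real.exp_one_lt_d9
          _ < 3 := by norm_num
    _ ≤ Real.log (N : ℝ) := Real.log_le_log (by norm_num) hNr3
  have hL0 : 0 < L := by linarith
  set t : ℝ := 1 / L with htdef
  have ht0 : 0 < t := by positivity
  have ht1 : t ≤ 1 := by
    rw [htdef]
    rw [div_le_one hL0]
    linarith
  set c : (Fin n → ZMod p) → ℝ := fun v => Real.cos (2 * Real.pi * bracket p n v ξ) with hcdef
  have hc_re : ∀ v, (eC (-(bracket p n v ξ))).re = c v := by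
    intro v
    rw [eC_re, hcdef]
    simp [mul_neg, Real.cos_neg]
  have hc1 : ∀ v, |c v| ≤ 1 := fun v => Real.abs_cos_le_one _
  -- sum of c is 0
  have hone : ((1 : ℕ) : ZMod p) ≠ 0 := by
    simp only [Nat.cast_one]
    exact one_ne_zero
  have hsum0 : ∑ v, c v = 0 := by
    have h := sum_eC_eq_zero hp 1 hone ξ hξ
    push_cast at h
    have : (∑ v : Fin n → ZMod p, eC (-(1 * bracket p n v ξ))).re = 0 := by rw [h]; simp
    rw [Complex.re_sum] at this
    rw [← this]
    refine Finset.sum_congr rfl fun v _ => ?_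
    rw [one_mul, hc_re]
  -- sum of c^2 is N/2
  have htwo : ((2 : ℕ) : ZMod p) ≠ 0 := by
    rw [Ne, ZMod.natCast_eq_zero_iff]
    intro hdvd
    have := Nat.le_of_dvd (by norm_num) hdvd
    omega
  have hsum2 : ∑ v, (c v) ^ 2 = (N : ℝ) / 2 := by
    have h := sum_eC_eq_zero hp 2 htwo ξ hξ
    push_cast at h
    have h2 : ∑ v : Fin n → ZMod p, (eC (-(2 * bracket p n v ξ))).re = 0 := by
      rw [← Complex.re_sum, h]; simp
    have hcsq : ∀ v : Fin n → ZMod p,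
        (c v) ^ 2 = 1 / 2 + (eC (-((2:ℝ) * bracket p n v ξ))).re / 2 := by
      intro v
      rw [hcdef]
      simp only
      rw [Real.cos_sq, eC_re]
      push_cast
      ring_nf
      rw [Real.cos_neg]
    rw [Finset.sum_congr rfl fun v _ => hcsq v]
    rw [Finset.sum_add_distrib, Finset.sum_const, ← Finset.sum_div]
    push_cast at h2 ⊢
    rw [h2]
    simp [hNdef]
    ring
  set a : ℝ := q * (N : ℝ) / L with hadef
  have hXre : ∀ S : Finset (Fin n → ZMod p),
      (∑ v ∈ S, eC (-(bracket p n v ξ))).re = ∑ v ∈ S, c v := by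
    intro S
    rw [Complex.re_sum]
    exact Finset.sum_congr rfl fun v _ => hc_re v
  have hw_nonneg : ∀ S : Finset (Fin n → ZMod p), 0 ≤ bernoulliWeight p n q S := by
    intro S
    unfold bernoulliWeight
    have h1q : (0:ℝ) ≤ 1 - q := by linarith
    positivity
  calc ∑ S ∈ (Finset.univ : Finset (Fin n → ZMod p)).powerset.filter
          (fun S => a ≤ (∑ v ∈ S, eC (-(bracket p n v ξ))).re),
        bernoulliWeight p n q S
      ≤ ∑ S ∈ (Finset.univ : Finset (Fin n → ZMod p)).powerset.filter
          (fun S => a ≤ (∑ v ∈ S, eC (-(bracket p n v ξ))).re),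
          bernoulliWeight p n q S * Real.exp (t * ((∑ v ∈ S, c v) - a)) := by
        refine Finset.sum_le_sum fun S hS => ?_
        have hmem := (Finset.mem_filter.mp hS).2
        rw [hXre] at hmem
        refine le_mul_of_one_le_right (hw_nonneg S) ?_
        rw [← Real.exp_zero]
        exact Real.exp_le_exp.mpr (mul_nonneg ht0.le (by linarith))
    _ ≤ ∑ S ∈ (Finset.univ : Finset (Fin n → ZMod p)).powerset,
          bernoulliWeight p n q S * Real.exp (t * ((∑ v ∈ S, c v) - a)) := by
        refine Finset.sum_le_sum_of_subset_of_nonneg (Finset.filter_subset _ _)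
          fun S _ _ => mul_nonneg (hw_nonneg S) (Real.exp_pos _).le
    _ = Real.exp (-(t * a)) * ∑ S ∈ (Finset.univ : Finset (Fin n → ZMod p)).powerset,
          bernoulliWeight p n q S * Real.exp (t * ∑ v ∈ S, c v) := by
        rw [Finset.mul_sum]
        refine Finset.sum_congr rfl fun S _ => ?_
        rw [show t * ((∑ v ∈ S, c v) - a) = t * ∑ v ∈ S, c v + -(t * a) by ring,
          Real.exp_add]
        ring
    _ = Real.exp (-(t * a)) * ∏ v, (q * Real.exp (t * c v) + (1 - q)) := by
        congr 1
        rw [Finset.prod_add]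
        refine Finset.sum_congr rfl fun S _ => ?_
        unfold bernoulliWeight
        rw [Finset.prod_mul_distrib, Finset.prod_const, Finset.prod_const,
          Finset.card_sdiff_of_subset (Finset.subset_univ S), Finset.card_univ,
          ← Real.exp_sum, ← Finset.mul_sum, ← hNdef]
        ring
    _ ≤ Real.exp (-(t * a)) * ∏ v, Real.exp (q * (t * c v + t ^ 2 * c v ^ 2)) := by
        refine mul_le_mul_of_nonneg_left ?_ (Real.exp_pos _).le
        refine Finset.prod_le_prod (fun v _ => ?_) (fun v _ => ?_)
        · have : (0:ℝ) ≤ 1 - q := by linarith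
          positivity
        · have hx : |t * c v| ≤ 1 := by
            rw [abs_mul, abs_of_pos ht0]
            calc t * |c v| ≤ t * 1 := mul_le_mul_of_nonneg_left (hc1 v) ht0.le
            _ ≤ 1 := by linarith
          have he := exp_le_one_add_add_sq hx
          have h3 : q * Real.exp (t * c v) ≤ q * (1 + t * c v + (t * c v) ^ 2) :=
            mul_le_mul_of_nonneg_left he hq0.le
          have h4 := Real.add_one_le_exp (q * (t * c v + t ^ 2 * c v ^ 2))
          nlinarith [h3, h4]
    _ = Real.exp (-(t * a) + q * (t * 0 + t ^ 2 * ((N : ℝ) / 2))) := by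
        rw [← Real.exp_sum, ← Real.exp_add]
        congr 1
        have : ∑ v : Fin n → ZMod p, q * (t * c v + t ^ 2 * c v ^ 2)
            = q * (t * ∑ v, c v + t ^ 2 * ∑ v, c v ^ 2) := by
          rw [Finset.mul_sum, Finset.mul_sum, ← Finset.sum_add_distrib, Finset.mul_sum]
        rw [this, hsum0, hsum2]
    _ = Real.exp (-(q * (N : ℝ)) / (2 * L ^ 2)) := by
        congr 1
        rw [hadef, htdef]
        have hLne : L ≠ 0 := ne_of_gt hL0
        field_simp
        ring
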